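/- For all integers 0 ≤ k ≤ n, the number of words of length n+k over the alphabet {E, N} containing exactly n letters E and k letters N, such that every prefix contains at least as many E's as N's, equals C_{n,k}. (Such words encode lattice paths from (0,0) to (n,k) with unit east and north steps that never go above the line y = x.) -/

import Mathlib

/-- Catalan's triangle: `C_{n,k} = ((n-k+1)/(n+1)) * binom(n+k, n)` (the division is exact). -/
def catalanTriangle (n k : ℕ) : ℕ := (n - k + 1) * (n + k).choose n / (n + 1)

/-- A word over the alphabet `{E, N}` (with `true = E`, `false = N`) with `n` letters `E` and
`k` letters `N` such that every prefix contains at least as many `E`'s as `N`'s; these encode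
lattice paths from `(0,0)` to `(n,k)` not going above the line `y = x`. -/
def IsBallotWord (n k : ℕ) (w : List Bool) : Prop :=
  w.length = n + k ∧ w.count true = n ∧ w.count false = k ∧
    ∀ i, (w.take i).count false ≤ (w.take i).count true



lemma cat_zero (n : ℕ) : catalanTriangle n 0 = 1 := by
  simp [catalanTriangle, Nat.div_self (Nat.succ_pos n)]

lemma choose_mono_aux {N r : ℕ} (h : 2 * r + 2 ≤ N) : N.choose r ≤ N.choose (r+1) :=
  Nat.choose_le_succ_of_lt_half_left (by omega)

lemma cat_eq (n j : ℕ) (h : j + 1 ≤ n) :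
    catalanTriangle n (j+1) = (n+j+1).choose (j+1) - (n+j+1).choose j := by
  have id1 : (n+j+1).choose (j+1) * (j+1) = (n+j+1).choose j * (n+1) := by
    rw [Nat.choose_succ_right_eq]; congr 1; omega
  have hle : (n+j+1).choose j ≤ (n+j+1).choose (j+1) := choose_mono_aux (by omega)
  have main : (n+1) * ((n+j+1).choose (j+1) - (n+j+1).choose j)
      = (n - (j+1) + 1) * (n+j+1).choose (j+1) := by
    have h2 : n - (j+1) + 1 = n - j := by omega
    rw [h2]
    zify [hle, show j ≤ n by omega]
    have id1z : ((n+j+1).choose (j+1) : ℤ) * (j+1) = (n+j+1).choose j * (n+1) := by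
      exact_mod_cast id1
    linear_combination id1z
  have hsymm : (n+(j+1)).choose n = (n+j+1).choose (j+1) := by
    have := Nat.choose_symm (n := n+j+1) (k := j+1) (by omega)
    rw [show n+j+1-(j+1) = n by omega] at this
    rw [show n+(j+1) = n+j+1 by omega, this]
  rw [catalanTriangle, hsymm, ← main, Nat.mul_div_cancel_left _ (Nat.succ_pos n)]

lemma cat_rec (m j : ℕ) (h : j + 1 ≤ m) :
    catalanTriangle (m+1) (j+1) = catalanTriangle m (j+1) + catalanTriangle (m+1) j := by
  cases j with
  | zero =>
    rw [cat_eq (m+1) 0 (by omega), cat_eq m 0 (by omega), cat_zero]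
    simp [Nat.choose_one_right]
  | succ i =>
    rw [cat_eq (m+1) (i+1) (by omega), cat_eq m (i+1) (by omega), cat_eq (m+1) i (by omega)]
    simp only [show m+1+(i+1)+1 = m+i+3 from by omega, show m+(i+1)+1 = m+i+2 from by omega,
      show m+1+i+1 = m+i+2 from by omega, show i+1+1 = i+2 from rfl]
    have p1 : (m+i+3).choose (i+2) = (m+i+2).choose (i+1) + (m+i+2).choose (i+2) := by
      rw [show m+i+3 = (m+i+2)+1 from rfl]; exact Nat.choose_succ_succ' _ _
    have p2 : (m+i+3).choose (i+1) = (m+i+2).choose i + (m+i+2).choose (i+1) := by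
      rw [show m+i+3 = (m+i+2)+1 from rfl]; exact Nat.choose_succ_succ' _ _
    have iA : (m+i+2).choose (i+1) ≤ (m+i+2).choose (i+2) := choose_mono_aux (by omega)
    have iC : (m+i+2).choose i ≤ (m+i+2).choose (i+1) := choose_mono_aux (by omega)
    omega

lemma cat_diag (m : ℕ) : catalanTriangle (m+1) (m+1) = catalanTriangle (m+1) m := by
  cases m with
  | zero => rfl
  | succ i =>
    rw [cat_eq (i+2) (i+1) (by omega), cat_eq (i+2) i (by omega)]
    simp only [show i+2+(i+1)+1 = 2*i+4 from by omega, show i+2+i+1 = 2*i+3 from by omega,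
      show i+1+1 = i+2 from rfl]
    have p1 : (2*i+4).choose (i+2) = (2*i+3).choose (i+1) + (2*i+3).choose (i+2) := by
      rw [show 2*i+4 = (2*i+3)+1 from by omega]; exact Nat.choose_succ_succ' _ _
    have p2 : (2*i+4).choose (i+1) = (2*i+3).choose i + (2*i+3).choose (i+1) := by
      rw [show 2*i+4 = (2*i+3)+1 from by omega]; exact Nat.choose_succ_succ' _ _
    have sym : (2*i+3).choose (i+2) = (2*i+3).choose (i+1) := by
      have := Nat.choose_symm (n := 2*i+3) (k := i+2) (by omega)
      rw [show 2*i+3-(i+2) = i+1 from by omega] at this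
      exact this.symm
    have iC : (2*i+3).choose i ≤ (2*i+3).choose (i+1) := choose_mono_aux (by omega)
    omega


def BSet (n k : ℕ) : Set (List Bool) := {w | IsBallotWord n k w}

lemma bset_finite (n k : ℕ) : (BSet n k).Finite :=
  (List.finite_length_eq Bool (n + k)).subset (fun _ hw => hw.1)

lemma bset_zero (n : ℕ) : BSet n 0 = {List.replicate n true} := by
  ext w
  constructor
  · rintro ⟨hl, ht, hf, -⟩
    have hnof : false ∉ w := List.count_eq_zero.mp hf
    refine Set.mem_singleton_iff.mpr (List.eq_replicate_iff.mpr ⟨by omega, fun b hb => ?_⟩)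
    cases b
    · exact absurd hb hnof
    · rfl
  · rintro rfl
    refine ⟨by simp, by simp [List.count_replicate], by simp [List.count_replicate], fun i => ?_⟩
    rw [List.take_replicate]
    simp [List.count_replicate]

lemma bset_empty_of_lt (n k : ℕ) (h : n < k) : BSet n k = ∅ := by
  ext w
  simp only [Set.mem_empty_iff_false, iff_false]
  rintro ⟨hl, ht, hf, hp⟩
  have := hp w.length
  rw [List.take_length, ht, hf] at this
  omega

lemma ballot_append (w : List Bool) (x : Bool) :
    (∀ i, ((w ++ [x]).take i).count false ≤ ((w ++ [x]).take i).count true) ↔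
    ((∀ i, (w.take i).count false ≤ (w.take i).count true) ∧
      (w ++ [x]).count false ≤ (w ++ [x]).count true) := by
  constructor
  · intro h
    constructor
    · intro i
      rcases le_or_gt i w.length with h' | h'
      · have := h i
        rwa [List.take_append_of_le_length h'] at this
      · have := h w.length
        rw [List.take_append_of_le_length le_rfl, List.take_length] at this
        rwa [List.take_of_length_le h'.le]
    · have := h (w.length + 1)
      rwa [List.take_of_length_le (by simp)] at this
  · rintro ⟨h1, h2⟩ i
    rcases le_or_gt i w.length with h' | h'
    · rw [List.take_append_of_le_length h']
      exact h1 i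
    · rw [List.take_of_length_le (by simp; omega)]
      exact h2

lemma bset_split (m j : ℕ) (hk : j ≤ m) :
    BSet (m+1) (j+1) =
      (fun w => w ++ [true]) '' BSet m (j+1) ∪ (fun w => w ++ [false]) '' BSet (m+1) j := by
  ext w
  constructor
  · rintro ⟨hl, ht, hf, hp⟩
    have hne : w ≠ [] := by intro h; rw [h] at hl; simp at hl
    rcases (List.eq_nil_or_concat w).resolve_left hne with ⟨w', x, rfl⟩
    rw [List.concat_eq_append] at hl ht hf hp ⊢
    have hl' : w'.length + 1 = m + 1 + (j + 1) := by simpa using hl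
    have hp' := (ballot_append w' x).mp hp |>.1
    cases x
    · right
      refine ⟨w', ⟨by omega, ?_, ?_, hp'⟩, rfl⟩
      · simpa using ht
      · have : w'.count false + 1 = j + 1 := by simpa using hf
        omega
    · left
      refine ⟨w', ⟨by omega, ?_, ?_, hp'⟩, rfl⟩
      · have : w'.count true + 1 = m + 1 := by simpa using ht
        omega
      · simpa using hf
  · rintro (⟨w', ⟨hl, ht, hf, hp⟩, rfl⟩ | ⟨w', ⟨hl, ht, hf, hp⟩, rfl⟩)
    · refine ⟨by simp [hl]; omega, by simp [ht], by simp [hf], ?_⟩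
      refine (ballot_append w' true).mpr ⟨hp, ?_⟩
      simp [ht, hf]
      omega
    · refine ⟨by simp [hl]; omega, by simp [ht], by simp [hf], ?_⟩
      refine (ballot_append w' false).mpr ⟨hp, ?_⟩
      simp [ht, hf]
      omega

lemma append_inj (x : Bool) : Function.Injective (fun w : List Bool => w ++ [x]) := by
  intro a b h
  simpa using h

lemma bset_card_split (m j : ℕ) (hk : j ≤ m) :
    (BSet (m+1) (j+1)).ncard = (BSet m (j+1)).ncard + (BSet (m+1) j).ncard := by
  rw [bset_split m j hk, Set.ncard_union_eq ?disj (((bset_finite _ _).image _))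
    (((bset_finite _ _).image _)), Set.ncard_image_of_injective _ (append_inj true),
    Set.ncard_image_of_injective _ (append_inj false)]
  case disj =>
    rw [Set.disjoint_left]
    rintro w ⟨a, -, rfl⟩ ⟨b, -, hb⟩
    have := congrArg List.getLast? hb
    simp [List.getLast?_concat] at this

lemma bset_ncard : ∀ s n k : ℕ, n + k ≤ s → k ≤ n → (BSet n k).ncard = catalanTriangle n k := by
  intro s
  induction s with
  | zero =>
    intro n k h hk
    obtain rfl : k = 0 := by omega
    rw [bset_zero, Set.ncard_singleton, cat_zero]
  | succ s ih =>
    intro n k hs hk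
    cases k with
    | zero => rw [bset_zero, Set.ncard_singleton, cat_zero]
    | succ j =>
      obtain ⟨m, rfl⟩ : ∃ m, n = m + 1 := ⟨n - 1, by omega⟩
      rw [bset_card_split m j (by omega)]
      rcases Nat.lt_or_ge j m with h | h
      · rw [ih m (j+1) (by omega) (by omega), ih (m+1) j (by omega) (by omega)]
        exact (cat_rec m j (by omega)).symm
      · obtain rfl : j = m := by omega
        rw [bset_empty_of_lt j (j+1) (by omega), Set.ncard_empty,
          ih (j+1) j (by omega) (by omega), zero_add]
        exact (cat_diag j).symm

/-- The number of such words equals `C_{n,k}`. -/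
theorem card_ballotWords (n k : ℕ) (hk : k ≤ n) :
    Nat.card {w : List Bool // IsBallotWord n k w} = catalanTriangle n k := by
  have hc : Nat.card {w : List Bool // IsBallotWord n k w} = (BSet n k).ncard :=
    Nat.card_coe_set_eq (BSet n k)
  rw [hc]
  exact bset_ncard (n + k) n k le_rfl hk
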